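/- Let a > 0 and b ∈ ℝ, and let h : [s₀,∞) → ℝ be twice continuously differentiable with h(s)/s → 0 as s → ∞. Suppose there exist constants B ∈ ℝ and ε-approximations such that for every ε > 0 there is s₁ ≥ s₀ with B - ε ≤ h''(s) + (2a s + b·h(s) + d) h'(s) ≤ B + ε for all s ≥ s₁ (with d ∈ ℝ fixed). Then lim_{s→∞} s h'(s) = B/(2a). -/

import Mathlib

open Filter


-- pointwise comparison lemmas
lemma aux_upper (a δ B ε gg mm : ℝ) (ha : 0 < a) (hδ : 0 < δ) (hδa : δ ≤ a)
    (hg : gg ≤ B + ε) (hm1 : 2*a - δ ≤ mm) (hm2 : mm ≤ 2*a + δ) :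
    gg ≤ max ((B+ε)/(2*a-δ)) ((B+ε)/(2*a+δ)) * mm := by
  have h1 : 0 < 2*a - δ := by linarith
  have h2 : 0 < 2*a + δ := by linarith
  have hm0 : 0 < mm := by linarith
  rcases le_or_gt 0 (B+ε) with hB | hB
  · have he : (B+ε) = (B+ε)/(2*a-δ) * (2*a-δ) := by field_simp
    calc gg ≤ B + ε := hg
      _ = (B+ε)/(2*a-δ) * (2*a-δ) := he
      _ ≤ (B+ε)/(2*a-δ) * mm := mul_le_mul_of_nonneg_left hm1 (div_nonneg hB h1.le)
      _ ≤ max ((B+ε)/(2*a-δ)) ((B+ε)/(2*a+δ)) * mm :=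
          mul_le_mul_of_nonneg_right (le_max_left _ _) hm0.le
  · have he : (B+ε) = (B+ε)/(2*a+δ) * (2*a+δ) := by field_simp
    have hneg : (B+ε)/(2*a+δ) ≤ 0 := div_nonpos_of_nonpos_of_nonneg hB.le h2.le
    calc gg ≤ B + ε := hg
      _ = (B+ε)/(2*a+δ) * (2*a+δ) := he
      _ ≤ (B+ε)/(2*a+δ) * mm := by nlinarith
      _ ≤ max ((B+ε)/(2*a-δ)) ((B+ε)/(2*a+δ)) * mm :=
          mul_le_mul_of_nonneg_right (le_max_right _ _) hm0.le

lemma aux_lower (a δ B ε gg mm : ℝ) (ha : 0 < a) (hδ : 0 < δ) (hδa : δ ≤ a)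
    (hg : B - ε ≤ gg) (hm1 : 2*a - δ ≤ mm) (hm2 : mm ≤ 2*a + δ) :
    min ((B-ε)/(2*a-δ)) ((B-ε)/(2*a+δ)) * mm ≤ gg := by
  have h1 : 0 < 2*a - δ := by linarith
  have h2 : 0 < 2*a + δ := by linarith
  have hm0 : 0 < mm := by linarith
  rcases le_or_gt 0 (B-ε) with hB | hB
  · have he : (B-ε)/(2*a+δ) * (2*a+δ) = B-ε := by field_simp
    calc min ((B-ε)/(2*a-δ)) ((B-ε)/(2*a+δ)) * mm
        ≤ (B-ε)/(2*a+δ) * mm :=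
          mul_le_mul_of_nonneg_right (min_le_right _ _) hm0.le
      _ ≤ (B-ε)/(2*a+δ) * (2*a+δ) :=
          mul_le_mul_of_nonneg_left hm2 (div_nonneg hB h2.le)
      _ = B - ε := he
      _ ≤ gg := hg
  · have he : (B-ε)/(2*a-δ) * (2*a-δ) = B-ε := by field_simp
    have hneg : (B-ε)/(2*a-δ) ≤ 0 := div_nonpos_of_nonpos_of_nonneg hB.le h1.le
    calc min ((B-ε)/(2*a-δ)) ((B-ε)/(2*a+δ)) * mm
        ≤ (B-ε)/(2*a-δ) * mm :=
          mul_le_mul_of_nonneg_right (min_le_left _ _) hm0.le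
      _ ≤ (B-ε)/(2*a-δ) * (2*a-δ) := by nlinarith
      _ = B - ε := he
      _ ≤ gg := hg

lemma aux_cb (a ε₀ δ B D : ℝ) (ha : 0 < a) (hε : 0 < ε₀) (hδ : 0 < δ) (hδa : δ ≤ a)
    (hδ2 : δ*(|B|+1) ≤ a^2*ε₀/2) (hD1 : 2*a - δ ≤ D) (hD2 : D ≤ 2*a + δ) :
    (B + a*ε₀/4)/D ≤ B/(2*a) + ε₀/2 ∧ B/(2*a) - ε₀/2 ≤ (B - a*ε₀/4)/D := by
  have hD0 : 0 < D := by linarith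
  have ha2 : (0:ℝ) < 2*a := by linarith
  have hL : B/(2*a)*(2*a) = B := by field_simp
  have hLabs : |B/(2*a)| * δ ≤ a*ε₀/4 := by
    rw [abs_div, abs_of_pos ha2, div_mul_eq_mul_div, div_le_iff₀ ha2]
    nlinarith [abs_nonneg B]
  have h2 : |(B/(2*a))*(D - 2*a)| ≤ a*ε₀/4 := by
    rw [abs_mul]
    calc |B/(2*a)| * |D - 2*a| ≤ |B/(2*a)| * δ :=
          mul_le_mul_of_nonneg_left (abs_le.mpr ⟨by linarith, by linarith⟩) (abs_nonneg _)
      _ ≤ a*ε₀/4 := hLabs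
  obtain ⟨h2a, h2b⟩ := abs_le.mp h2
  have hεD : ε₀/2*(2*a-δ) ≤ ε₀/2*D := mul_le_mul_of_nonneg_left hD1 (by positivity)
  have hεa : 0 ≤ ε₀*(a-δ) := mul_nonneg hε.le (by linarith)
  constructor
  · rw [div_le_iff₀ hD0]
    have key : (B/(2*a) + ε₀/2)*D = (B/(2*a))*(D-2*a) + B + ε₀/2*D := by
      linear_combination hL
    rw [key]; nlinarith
  · rw [sub_le_iff_le_add, div_add' _ _ _ hD0.ne', le_div_iff₀ hD0]
    have key : (B/(2*a))*D = (B/(2*a))*(D-2*a) + B := by linear_combination hL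
    nlinarith

lemma aux_H_sublinear (s₀ : ℝ) (h : ℝ → ℝ) (hcont : ContinuousOn h (Set.Ioi s₀))
    (hsub : Tendsto (fun s => h s / s) atTop (nhds 0)) :
    Tendsto (fun s => (∫ t in (s₀+1)..s, h t) / s^2) atTop (nhds 0) := by
  set c : ℝ := s₀ + 1 with hc
  have hint : ∀ x y, s₀ < x → s₀ < y → IntervalIntegrable h MeasureTheory.volume x y := by
    intro x y hx hy
    apply ContinuousOn.intervalIntegrable
    apply hcont.mono
    intro t ht
    rcases Set.mem_uIcc.mp ht with ⟨h1, _⟩ | ⟨h1, _⟩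
    · exact lt_of_lt_of_le hx h1
    · exact lt_of_lt_of_le hy h1
  set H : ℝ → ℝ := fun s => ∫ t in c..s, h t with hH
  rw [Metric.tendsto_atTop]
  intro ε hε
  obtain ⟨T₀, hT₀⟩ := Metric.tendsto_atTop.mp hsub (ε/4) (by linarith)
  set T := max T₀ (max (c+1) 1) with hT
  have hTc : c < T := lt_of_lt_of_le (by linarith)
    (le_trans (le_max_left (c+1) 1) (le_max_right T₀ _))
  have hT1 : 1 ≤ T := le_trans (le_max_right (c+1) 1) (le_max_right T₀ _)
  have hTs₀ : s₀ < T := by simp only [hc] at hTc; linarith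
  have habs : ∀ t ∈ Set.Icc T T, True := fun _ _ => trivial
  have hb : ∀ t, T ≤ t → |h t| ≤ ε/4 * t := by
    intro t ht
    have ht1 : 1 ≤ t := le_trans hT1 ht
    have h1 := hT₀ t (le_trans (le_max_left _ _) ht)
    rw [Real.dist_eq, sub_zero, abs_div] at h1
    have ht0 : (0:ℝ) < t := by linarith
    rw [abs_of_pos ht0] at h1
    have := (div_lt_iff₀ ht0).mp h1
    linarith
  refine ⟨max T (2*|H T|/ε + 1), ?_⟩
  intro s hsge
  have hsT : T ≤ s := le_trans (le_max_left _ _) hsge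
  have hs1 : 1 ≤ s := le_trans hT1 hsT
  have hs0 : (0:ℝ) < s := by linarith
  have hss₀ : s₀ < s := lt_of_lt_of_le hTs₀ hsT
  have hsb : 2*|H T|/ε + 1 ≤ s := le_trans (le_max_right _ _) hsge
  -- H s - H T = ∫ T..s
  have hsplit : H s - H T = ∫ t in T..s, h t := by
    rw [hH]
    rw [intervalIntegral.integral_interval_sub_left (hint c s (by linarith) hss₀)
      (hint c T (by linarith) hTs₀)]
  have hbound : |∫ t in T..s, h t| ≤ ε/4 * (s^2/2 - T^2/2) := by
    have h1 : ‖∫ t in T..s, h t‖ ≤ ∫ t in T..s, ‖h t‖ :=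
      intervalIntegral.norm_integral_le_integral_norm hsT
    simp only [Real.norm_eq_abs] at h1
    have h2 : (∫ t in T..s, |h t|) ≤ ∫ t in T..s, ε/4 * t := by
      apply intervalIntegral.integral_mono_on hsT
      · exact (hint T s hTs₀ hss₀).abs
      · exact (continuous_const.mul continuous_id).intervalIntegrable T s
      · intro x hx
        exact hb x hx.1
    have h3 : (∫ t in T..s, ε/4 * t) = ε/4 * (s^2/2 - T^2/2) := by
      rw [intervalIntegral.integral_const_mul, integral_id]; ring
    rw [h3] at h2
    exact le_trans h1 h2
  rw [← hsplit] at hbound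
  have hHs : |H s| ≤ |H T| + ε/4 * (s^2/2 - T^2/2) := by
    have := abs_sub_abs_le_abs_sub (H s) (H T)
    linarith [abs_sub_abs_le_abs_sub (H s) (H T)]
  show dist (H s / s^2) 0 < ε
  rw [Real.dist_eq, sub_zero, abs_div, abs_of_pos (by positivity : (0:ℝ) < s^2)]
  rw [div_lt_iff₀ (by positivity : (0:ℝ) < s^2)]
  have hT0 : 0 < T := by linarith
  have hs2 : s ≤ s^2 := by nlinarith
  have hHT : 2*|H T| ≤ ε * (s - 1) * 1 + 2*|H T| := by nlinarith [abs_nonneg (H T)]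
  -- |H T| < ε/2 * s^2 :
  have h4 : |H T| < ε/2 * s^2 := by
    have h5 : 2*|H T|/ε < s := by linarith
    rw [div_lt_iff₀ hε] at h5
    nlinarith
  nlinarith [abs_nonneg (H s), abs_nonneg (H T)]



lemma aux_log : Tendsto (fun s => Real.log s / s^2) atTop (nhds 0) := by
  apply squeeze_zero' (g := fun s => 1/s) (t₀ := atTop)
  · filter_upwards [eventually_ge_atTop 1] with s hs
    exact div_nonneg (Real.log_nonneg hs) (by positivity)
  · filter_upwards [eventually_ge_atTop 1] with s hs
    have hs0 : (0:ℝ) < s := by linarith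
    have hlog : Real.log s ≤ s := by
      have := Real.log_le_sub_one_of_pos hs0
      linarith
    rw [div_le_div_iff₀ (by positivity) hs0, one_mul]
    nlinarith
  · simpa using tendsto_inv_atTop_zero (𝕜 := ℝ)

lemma aux_one_div : Tendsto (fun s : ℝ => 1/s) atTop (nhds 0) := by
  simpa using tendsto_inv_atTop_zero (𝕜 := ℝ)

lemma aux_F_top (a b d : ℝ) (H : ℝ → ℝ) (ha : 0 < a)
    (hH2 : Tendsto (fun s => H s / s^2) atTop (nhds 0)) :
    Tendsto (fun s => Real.exp (a*s^2 + b*H s + d*s) / s) atTop atTop := by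
  have hfac : Tendsto (fun s => a + (b*(H s/s^2) + (d*(1/s) - Real.log s/s^2)))
      atTop (nhds a) := by
    have : Tendsto (fun s => a + (b*(H s/s^2) + (d*(1/s) - Real.log s/s^2)))
        atTop (nhds (a + (b*0 + (d*0 - 0)))) := by
      apply Tendsto.const_add
      exact ((hH2.const_mul b).add ((aux_one_div.const_mul d).sub aux_log))
    simpa using this
  have hmul : Tendsto (fun s : ℝ => s^2 * (a + (b*(H s/s^2) + (d*(1/s) - Real.log s/s^2))))
      atTop atTop :=
    Tendsto.atTop_mul_pos ha (tendsto_pow_atTop two_ne_zero) hfac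
  have hexp : Tendsto (fun s => (a*s^2 + b*H s + d*s) - Real.log s) atTop atTop := by
    apply hmul.congr'
    filter_upwards [eventually_ge_atTop 1] with s hs
    have hs0 : s ≠ 0 := by intro h; rw [h] at hs; norm_num at hs
    field_simp
    ring
  have := Real.tendsto_exp_atTop.comp hexp
  apply this.congr'
  filter_upwards [eventually_gt_atTop 0] with s hs
  simp only [Function.comp]
  rw [Real.exp_sub, Real.exp_log hs]

lemma aux_m_lim (a b d : ℝ) (h : ℝ → ℝ)
    (hsub : Tendsto (fun s => h s / s) atTop (nhds 0)) :
    Tendsto (fun s => ((2*a*s + b*h s + d)*s - 1)/s^2) atTop (nhds (2*a)) := by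
  have h1 : Tendsto (fun s => 2*a + (b*(h s/s) + (d*(1/s) - (1/s)*(1/s))))
      atTop (nhds (2*a)) := by
    have : Tendsto (fun s => 2*a + (b*(h s/s) + (d*(1/s) - (1/s)*(1/s))))
        atTop (nhds (2*a + (b*0 + (d*0 - 0*0)))) := by
      apply Tendsto.const_add
      exact ((hsub.const_mul b).add ((aux_one_div.const_mul d).sub
        (aux_one_div.mul aux_one_div)))
    simpa using this
  apply h1.congr'
  filter_upwards [eventually_gt_atTop 0] with s hs
  have hs0 : s ≠ 0 := ne_of_gt hs
  field_simp
  ring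

theorem integrating_factor_limit (a b d B s₀ : ℝ) (ha : 0 < a)
    (h : ℝ → ℝ)
    (hreg : ContDiffOn ℝ 2 h (Set.Ici s₀))
    (hsublinear : Tendsto (fun s => h s / s) atTop (nhds 0))
    (happrox : ∀ ε > (0 : ℝ), ∃ s₁, s₀ ≤ s₁ ∧ ∀ s ≥ s₁,
      B - ε ≤ deriv (deriv h) s + (2 * a * s + b * h s + d) * deriv h s ∧
      deriv (deriv h) s + (2 * a * s + b * h s + d) * deriv h s ≤ B + ε) :
    Tendsto (fun s => s * deriv h s) atTop (nhds (B / (2 * a))) := by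
  have hcont : ContinuousOn h (Set.Ioi s₀) := hreg.continuousOn.mono Set.Ioi_subset_Ici_self
  have hregI : ContDiffOn ℝ 2 h (Set.Ioi s₀) := hreg.mono Set.Ioi_subset_Ici_self
  have hd1 : ∀ s, s₀ < s → HasDerivAt h (deriv h s) s := by
    intro s hs
    exact ((hregI.differentiableOn (by norm_num)).differentiableAt
      (isOpen_Ioi.mem_nhds hs)).hasDerivAt
  have hderivCD : ContDiffOn ℝ 1 (deriv h) (Set.Ioi s₀) :=
    hregI.deriv_of_isOpen isOpen_Ioi (by norm_num)
  have hd2 : ∀ s, s₀ < s → HasDerivAt (deriv h) (deriv (deriv h) s) s := by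
    intro s hs
    exact ((hderivCD.differentiableOn (by norm_num)).differentiableAt
      (isOpen_Ioi.mem_nhds hs)).hasDerivAt
  -- the primitive of h
  set H : ℝ → ℝ := fun s => ∫ t in (s₀+1)..s, h t with hHdef
  have hint : ∀ x y, s₀ < x → s₀ < y → IntervalIntegrable h MeasureTheory.volume x y := by
    intro x y hx hy
    apply ContinuousOn.intervalIntegrable
    apply hcont.mono
    intro t ht
    rcases Set.mem_uIcc.mp ht with ⟨h1, _⟩ | ⟨h1, _⟩
    · exact lt_of_lt_of_le hx h1
    · exact lt_of_lt_of_le hy h1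
  have hHd : ∀ s, s₀ < s → HasDerivAt H (h s) s := by
    intro s hs
    exact intervalIntegral.integral_hasDerivAt_right (hint _ s (by linarith) hs)
      (hcont.stronglyMeasurableAtFilter isOpen_Ioi s hs)
      (hcont.continuousAt (isOpen_Ioi.mem_nhds hs))
  -- the integrating factor
  set P : ℝ → ℝ := fun s => 2 * a * s + b * h s + d with hPdef
  set ψ : ℝ → ℝ := fun s => Real.exp (a*s^2 + b*H s + d*s) with hψdef
  have hψpos : ∀ s, 0 < ψ s := fun s => Real.exp_pos _
  have hψd : ∀ s, s₀ < s → HasDerivAt ψ (ψ s * P s) s := by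
    intro s hs
    have e1 : HasDerivAt (fun x : ℝ => a*x^2 + b*H x + d*x) (P s) s := by
      have e2 := (((hasDerivAt_pow 2 s).const_mul a).add
        ((hHd s hs).const_mul b)).add ((hasDerivAt_id s).const_mul d)
      refine e2.congr_deriv ?_
      simp [hPdef]; ring
    exact e1.exp
  set G : ℝ → ℝ := fun s => ψ s * deriv h s with hGdef
  have hGd : ∀ s, s₀ < s →
      HasDerivAt G (ψ s * (deriv (deriv h) s + P s * deriv h s)) s := by
    intro s hs
    have := (hψd s hs).mul (hd2 s hs)
    refine this.congr_deriv ?_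
    ring
  set F : ℝ → ℝ := fun s => ψ s / s with hFdef
  set m : ℝ → ℝ := fun s => (P s * s - 1)/s^2 with hmdef
  have hFd : ∀ s, s₀ < s → 0 < s → HasDerivAt F (ψ s * m s) s := by
    intro s hs hspos
    have := (hψd s hs).div (hasDerivAt_id s) (ne_of_gt hspos)
    refine this.congr_deriv ?_
    simp only [hmdef, id]
    field_simp
  have hmlim : Tendsto m atTop (nhds (2*a)) := aux_m_lim a b d h hsublinear
  have hH2 : Tendsto (fun s => H s / s^2) atTop (nhds 0) :=
    aux_H_sublinear s₀ h hcont hsublinear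
  have hFtop : Tendsto F atTop atTop := aux_F_top a b d H ha hH2
  -- main ε argument
  rw [Metric.tendsto_atTop]
  intro ε₀ hε₀
  set L := B/(2*a) with hLdef
  set ε := a*ε₀/4 with hεdef
  have hεpos : 0 < ε := by positivity
  set δ := min a (a^2*ε₀/(2*(|B|+1))) with hδdef
  have hB1 : (0:ℝ) < |B| + 1 := by positivity
  have hδpos : 0 < δ := lt_min ha (by positivity)
  have hδa : δ ≤ a := min_le_left _ _
  have hδ2 : δ*(|B|+1) ≤ a^2*ε₀/2 := by
    have h1 : δ ≤ a^2*ε₀/(2*(|B|+1)) := min_le_right _ _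
    calc δ*(|B|+1) ≤ (a^2*ε₀/(2*(|B|+1)))*(|B|+1) :=
          mul_le_mul_of_nonneg_right h1 hB1.le
      _ = a^2*ε₀/2 := by field_simp
  obtain ⟨s₁, hs₁0, hs₁⟩ := happrox ε hεpos
  obtain ⟨T₁, hT₁⟩ := Metric.tendsto_atTop.mp hmlim δ hδpos
  set T := max (max s₁ T₁) (max (s₀+1) 1) with hTdef
  have hTs₀ : s₀ < T :=
    lt_of_lt_of_le (by linarith) (le_trans (le_max_left (s₀+1) 1) (le_max_right _ _))
  have hT1 : 1 ≤ T := le_trans (le_max_right (s₀+1) 1) (le_max_right _ _)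
  have hTs₁ : s₁ ≤ T := le_trans (le_max_left s₁ T₁) (le_max_left _ _)
  have hTT₁ : T₁ ≤ T := le_trans (le_max_right s₁ T₁) (le_max_left _ _)
  have hmb : ∀ s, T ≤ s → 2*a - δ ≤ m s ∧ m s ≤ 2*a + δ := by
    intro s hs
    have := hT₁ s (le_trans hTT₁ hs)
    rw [Real.dist_eq] at this
    obtain ⟨u1, u2⟩ := abs_le.mp this.le
    constructor <;> linarith
  have hgb : ∀ s, T ≤ s → B - ε ≤ deriv (deriv h) s + P s * deriv h s ∧
      deriv (deriv h) s + P s * deriv h s ≤ B + ε := by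
    intro s hs
    exact hs₁ s (le_trans hTs₁ hs)
  set cp := max ((B+ε)/(2*a-δ)) ((B+ε)/(2*a+δ)) with hcpdef
  set cm := min ((B-ε)/(2*a-δ)) ((B-ε)/(2*a+δ)) with hcmdef
  have hcp : cp ≤ L + ε₀/2 := by
    rw [hcpdef, hεdef, hLdef]
    exact max_le
      (aux_cb a ε₀ δ B (2*a-δ) ha hε₀ hδpos hδa hδ2 (le_refl _) (by linarith)).1
      (aux_cb a ε₀ δ B (2*a+δ) ha hε₀ hδpos hδa hδ2 (by linarith) (le_refl _)).1
  have hcm : L - ε₀/2 ≤ cm := by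
    rw [hcmdef, hεdef, hLdef]
    exact le_min
      (aux_cb a ε₀ δ B (2*a-δ) ha hε₀ hδpos hδa hδ2 (le_refl _) (by linarith)).2
      (aux_cb a ε₀ δ B (2*a+δ) ha hε₀ hδpos hδa hδ2 (by linarith) (le_refl _)).2
  -- monotonicity principle
  have hmono : ∀ (u u' : ℝ → ℝ), (∀ x, T ≤ x → HasDerivAt u (u' x) x) →
      (∀ x, T ≤ x → 0 ≤ u' x) → ∀ s, T ≤ s → u T ≤ u s := by
    intro u u' hu hu' s hs
    have h1 : MonotoneOn u (Set.Ici T) := by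
      apply monotoneOn_of_deriv_nonneg (convex_Ici T)
      · intro x hx
        exact (hu x hx).continuousAt.continuousWithinAt
      · intro x hx
        rw [interior_Ici] at hx
        exact ((hu x (le_of_lt hx)).differentiableAt).differentiableWithinAt
      · intro x hx
        rw [interior_Ici] at hx
        rw [(hu x hx.le).deriv]
        exact hu' x hx.le
    exact h1 Set.self_mem_Ici hs hs
  have hupper : ∀ s, T ≤ s → G s ≤ cp * F s + (G T - cp * F T) := by
    have := hmono (fun x => cp * F x - G x)
      (fun x => cp * (ψ x * m x) - ψ x * (deriv (deriv h) x + P x * deriv h x))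
      (fun x hx => ((hFd x (lt_of_lt_of_le hTs₀ hx) (by linarith [hT1.trans hx])).const_mul cp).sub
        (hGd x (lt_of_lt_of_le hTs₀ hx)))
      ?_
    · intro s hs
      have h2 : cp * F T - G T ≤ cp * F s - G s := this s hs
      linarith
    · intro x hx
      have hub := aux_upper a δ B ε _ (m x) ha hδpos hδa (hgb x hx).2 (hmb x hx).1 (hmb x hx).2
      rw [← hcpdef] at hub
      show 0 ≤ cp * (ψ x * m x) - ψ x * (deriv (deriv h) x + P x * deriv h x)
      nlinarith [(hψpos x).le]
  have hlower : ∀ s, T ≤ s → cm * F s + (G T - cm * F T) ≤ G s := by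
    have := hmono (fun x => G x - cm * F x)
      (fun x => ψ x * (deriv (deriv h) x + P x * deriv h x) - cm * (ψ x * m x))
      (fun x hx => (hGd x (lt_of_lt_of_le hTs₀ hx)).sub
        ((hFd x (lt_of_lt_of_le hTs₀ hx) (by linarith [hT1.trans hx])).const_mul cm))
      ?_
    · intro s hs
      have h2 : G T - cm * F T ≤ G s - cm * F s := this s hs
      linarith
    · intro x hx
      have hlb := aux_lower a δ B ε _ (m x) ha hδpos hδa (hgb x hx).1 (hmb x hx).1 (hmb x hx).2
      rw [← hcmdef] at hlb
      show 0 ≤ ψ x * (deriv (deriv h) x + P x * deriv h x) - cm * (ψ x * m x)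
      nlinarith [(hψpos x).le]
  set K : ℝ := |G T - cp * F T| + |G T - cm * F T| with hKdef
  have hK0 : 0 ≤ K := by positivity
  obtain ⟨T₂, hT₂⟩ := eventually_atTop.mp (hFtop.eventually_ge_atTop (2*K/ε₀ + 1))
  refine ⟨max T T₂, fun s hs => ?_⟩
  have hsT : T ≤ s := le_trans (le_max_left _ _) hs
  have hsF : 2*K/ε₀ + 1 ≤ F s := hT₂ s (le_trans (le_max_right _ _) hs)
  have hFpos : 0 < F s := by
    have : (0:ℝ) < 2*K/ε₀ + 1 := by positivity
    linarith
  have hs1 : 1 ≤ s := hT1.trans hsT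
  have hs0 : (0:ℝ) < s := by linarith
  have hGF : s * deriv h s = G s / F s := by
    rw [hGdef, hFdef]
    simp only
    have hne : ψ s / s ≠ 0 := ne_of_gt (div_pos (hψpos s) hs0)
    rw [eq_div_iff hne]
    have h1 : s * deriv h s * (ψ s / s) = ψ s * deriv h s * (s / s) := by ring
    rw [h1, div_self hs0.ne', mul_one]
  have hup := hupper s hsT
  have hlo := hlower s hsT
  have hKp : |G T - cp * F T| ≤ K := by
    rw [hKdef]; linarith [abs_nonneg (G T - cm * F T)]
  have hKm : |G T - cm * F T| ≤ K := by
    rw [hKdef]; linarith [abs_nonneg (G T - cp * F T)]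
  have hKF : K / F s < ε₀/2 := by
    rw [div_lt_iff₀ hFpos]
    have he : ε₀/2 * (2*K/ε₀ + 1) = K + ε₀/2 := by field_simp
    have := mul_le_mul_of_nonneg_left hsF (by positivity : (0:ℝ) ≤ ε₀/2)
    rw [he] at this
    linarith
  have hub2 : G s / F s ≤ cp + K / F s := by
    have h3 : (cp + K / F s) * F s = cp * F s + K := by
      rw [add_mul, div_mul_cancel₀ K hFpos.ne']
    rw [div_le_iff₀ hFpos, h3]
    have h1 : G T - cp * F T ≤ K := le_trans (le_abs_self _) hKp
    linarith
  have hlb2 : cm - K / F s ≤ G s / F s := by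
    have h3 : (cm - K / F s) * F s = cm * F s - K := by
      rw [sub_mul, div_mul_cancel₀ K hFpos.ne']
    rw [le_div_iff₀ hFpos, h3]
    have h1 : -K ≤ G T - cm * F T := by
      have := neg_abs_le (G T - cm * F T)
      linarith
    linarith
  rw [Real.dist_eq, hGF]
  rw [abs_sub_lt_iff]
  constructor
  · linarith
  · linarith
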